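/- Let {φ_t}_{t≥1} be vectors in ℝ^d with ‖φ_t‖₂ ≤ 1, let Λ_0 be positive definite with λ_min(Λ_0) ≥ 1, and define Λ_t = Λ_0 + Σ_{i=1}^{t−1} φ_i φ_iᵀ. Then for every t ≥ 1: log(det(Λ_{t+1})/det(Λ_1)) ≤ Σ_{i=1}^t φ_iᵀ Λ_i^{-1} φ_i ≤ 2 log(det(Λ_{t+1})/det(Λ_1)). -/

import Mathlib

open Matrix Finset

lemma outer_psd {d : ℕ} (v : Fin d → ℝ) : (Matrix.vecMulVec v v).PosSemidef := by
  refine Matrix.PosSemidef.of_dotProduct_mulVec_nonneg ?_ ?_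
  · ext i j
    simp [Matrix.vecMulVec, Matrix.conjTranspose_apply, mul_comm]
  · intro x
    have h : (Matrix.vecMulVec v v) *ᵥ x = (v ⬝ᵥ x) • v := by
      ext i
      simp [Matrix.mulVec, Matrix.vecMulVec, dotProduct, Finset.mul_sum, mul_assoc,
        mul_comm, mul_left_comm]
    rw [h]
    simp only [star_trivial, dotProduct_smul, smul_eq_mul]
    rw [dotProduct_comm]
    exact mul_self_nonneg _

lemma det_rank_one_update {d : ℕ} {A : Matrix (Fin d) (Fin d) ℝ} (hA : A.PosDef)
    (u : Fin d → ℝ) :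
    (A + Matrix.vecMulVec u u).det = A.det * (1 + u ⬝ᵥ (A⁻¹ *ᵥ u)) := by
  have hdet : IsUnit A.det := hA.det_pos.ne'.isUnit
  rw [Matrix.vecMulVec_eq Unit, Matrix.det_add_replicateCol_mul_replicateRow hdet]
  congr 1
  rw [Matrix.mul_assoc, ← Matrix.replicateCol_mulVec]
  simp [Matrix.det_unique]

lemma quad_bounds {d : ℕ} {A : Matrix (Fin d) (Fin d) ℝ} (hA : A.PosDef)
    (hA1 : (A - 1).PosSemidef) (u : Fin d → ℝ) (hu : ∑ j, u j ^ 2 ≤ 1) :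
    0 ≤ u ⬝ᵥ (A⁻¹ *ᵥ u) ∧ u ⬝ᵥ (A⁻¹ *ᵥ u) ≤ 1 := by
  have hdet : IsUnit A.det := hA.det_pos.ne'.isUnit
  have h0 : 0 ≤ u ⬝ᵥ (A⁻¹ *ᵥ u) := by
    simpa using hA.inv.posSemidef.dotProduct_mulVec_nonneg u
  refine ⟨h0, ?_⟩
  set y := A⁻¹ *ᵥ u with hy
  have huAy : u = A *ᵥ y := by
    rw [hy, Matrix.mulVec_mulVec, Matrix.mul_nonsing_inv _ hdet, Matrix.one_mulVec]
  have hc : u ⬝ᵥ y = y ⬝ᵥ (A *ᵥ y) := by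
    rw [dotProduct_comm]
    nth_rewrite 1 [huAy]
    rfl
  have hyy : y ⬝ᵥ y ≤ y ⬝ᵥ (A *ᵥ y) := by
    have := hA1.dotProduct_mulVec_nonneg y
    simp only [star_trivial, Matrix.sub_mulVec, Matrix.one_mulVec,
      dotProduct_sub] at this
    linarith
  have hcau : (y ⬝ᵥ u) ^ 2 ≤ (y ⬝ᵥ y) * (u ⬝ᵥ u) := by
    have := Finset.sum_mul_sq_le_sq_mul_sq Finset.univ y u
    simpa [dotProduct, pow_two] using this
  have hyu : y ⬝ᵥ u = u ⬝ᵥ y := dotProduct_comm y u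
  have huu : u ⬝ᵥ u ≤ 1 := by
    simpa [dotProduct, pow_two] using hu
  have huu0 : 0 ≤ u ⬝ᵥ u := by
    simp only [dotProduct]
    exact Finset.sum_nonneg fun i _ => mul_self_nonneg _
  have hyy0 : 0 ≤ y ⬝ᵥ y := by
    simp only [dotProduct]
    exact Finset.sum_nonneg fun i _ => mul_self_nonneg _
  nlinarith [hcau, hyy, hc, hyu, huu, huu0, hyy0, h0]

/-- Elliptical potential lemma. -/
theorem stmt8 (d : ℕ) (Λ0 : Matrix (Fin d) (Fin d) ℝ)
    (hΛ0 : (Λ0 - 1).PosSemidef)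
    (φ : ℕ → Fin d → ℝ) (hφ : ∀ i, Real.sqrt (∑ j, (φ i j) ^ 2) ≤ 1)
    (Λ : ℕ → Matrix (Fin d) (Fin d) ℝ)
    (hΛ : ∀ t, Λ t = Λ0 + ∑ i ∈ Finset.Ico 1 t, Matrix.vecMulVec (φ i) (φ i)) :
    ∀ t ≥ 1,
      Real.log ((Λ (t + 1)).det / (Λ 1).det) ≤
          ∑ i ∈ Finset.Icc 1 t, φ i ⬝ᵥ ((Λ i)⁻¹ *ᵥ φ i) ∧
        ∑ i ∈ Finset.Icc 1 t, φ i ⬝ᵥ ((Λ i)⁻¹ *ᵥ φ i) ≤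
          2 * Real.log ((Λ (t + 1)).det / (Λ 1).det) := by
  intro t ht
  set x : ℕ → ℝ := fun i => φ i ⬝ᵥ ((Λ i)⁻¹ *ᵥ φ i) with hxdef
  have hsum : ∀ i, ∑ j, (φ i j) ^ 2 ≤ 1 := by
    intro i
    have h := hφ i
    have hnn : 0 ≤ ∑ j, (φ i j) ^ 2 := Finset.sum_nonneg fun _ _ => sq_nonneg _
    nlinarith [Real.sq_sqrt hnn, Real.sqrt_nonneg (∑ j, (φ i j) ^ 2)]
  have hPSD : ∀ s, (Λ s - 1).PosSemidef := by
    intro s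
    have hrw : Λ s - 1 = (Λ0 - 1) + ∑ i ∈ Finset.Ico 1 s, Matrix.vecMulVec (φ i) (φ i) := by
      rw [hΛ s]; abel
    rw [hrw]
    refine hΛ0.add ?_
    exact Finset.sum_induction _ _ (fun a b ha hb => ha.add hb) Matrix.PosSemidef.zero
      (fun i _ => outer_psd (φ i))
  have hPD : ∀ s, (Λ s).PosDef := by
    intro s
    have := Matrix.PosDef.posSemidef_add (hPSD s) Matrix.PosDef.one
    simpa using this
  have hx01 : ∀ i, 0 ≤ x i ∧ x i ≤ 1 := fun i =>
    quad_bounds (hPD i) (hPSD i) (φ i) (hsum i)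
  have hrec : ∀ s, 1 ≤ s → Λ (s + 1) = Λ s + Matrix.vecMulVec (φ s) (φ s) := by
    intro s hs
    rw [hΛ, hΛ, Finset.sum_Ico_succ_top hs, add_assoc]
  have key : ∀ s, 1 ≤ s → (Λ (s + 1)).det = (Λ 1).det * ∏ i ∈ Finset.Icc 1 s, (1 + x i) := by
    intro s hs
    induction s, hs using Nat.le_induction with
    | base =>
      rw [hrec 1 le_rfl, det_rank_one_update (hPD 1), Finset.Icc_self, Finset.prod_singleton]
    | succ n hn ih =>
      rw [hrec (n + 1) (by omega), det_rank_one_update (hPD (n + 1)), ih,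
        Finset.prod_Icc_succ_top (by omega), mul_assoc]
  have hfac : ∀ i, (0:ℝ) < 1 + x i := fun i => by linarith [(hx01 i).1]
  have hpos1 : 0 < (Λ 1).det := (hPD 1).det_pos
  have hlog : Real.log ((Λ (t + 1)).det / (Λ 1).det)
      = ∑ i ∈ Finset.Icc 1 t, Real.log (1 + x i) := by
    rw [key t ht, mul_comm, mul_div_assoc, div_self hpos1.ne', mul_one,
      Real.log_prod fun i _ => (hfac i).ne']
  constructor
  · rw [hlog]
    exact Finset.sum_le_sum fun i _ => by
      have := Real.log_le_sub_one_of_pos (hfac i)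
      linarith
  · rw [hlog, Finset.mul_sum]
    refine Finset.sum_le_sum fun i _ => ?_
    obtain ⟨h0, h1⟩ := hx01 i
    have hL := Real.one_sub_inv_le_log_of_pos (hfac i)
    have hinv : (1 + x i) * (1 + x i)⁻¹ = 1 := mul_inv_cancel₀ (hfac i).ne'
    nlinarith [hL, hinv, h0, h1, (hfac i)]
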